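/- The Danos–Regnier 4-ary non-decomposable connective is a dual pair: let P = {{(1,2),(3,4)}, {(1,3),(2,4)}} and Q = {{(1,4),(2),(3)}, {(2,3),(1),(4)}} be partition sets of {1,2,3,4}. Then every p ∈ P is orthogonal to every q ∈ Q (i.e., P ⊥ Q), and moreover P^⊥ = Q and Q^⊥ = P, so (P, Q) forms a pair of 4-ary generalized connectives (C, C*). -/

import Mathlib

/-! ## Partitions of `{1,…,n}`, meeting graphs, orthogonality (Danos–Regnier) -/

/-- A partition of `{1,…,n}`, represented as a `Finpartition` of `Fin n`. -/
abbrev PartitionN (n : ℕ) := Finpartition (Finset.univ : Finset (Fin n))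

/-- The (simple graph underlying the) meeting graph `G(p,q)` of two partitions of `{1,…,n}`:
its vertices are the classes of `p` together with the classes of `q`, and a class of `p` is
adjacent to a class of `q` iff some `i ∈ {1,…,n}` belongs to both (in the meeting multigraph
there is one edge for each such `i`). -/
def meetingGraph {n : ℕ} (p q : PartitionN n) :
    SimpleGraph ({c // c ∈ p.parts} ⊕ {d // d ∈ q.parts}) :=
  SimpleGraph.fromRel fun a b =>
    ∃ (c : {c // c ∈ p.parts}) (d : {d // d ∈ q.parts}),
      ((c : Finset (Fin n)) ∩ (d : Finset (Fin n))).Nonempty ∧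
      a = Sum.inl c ∧ b = Sum.inr d

/-- `p ⊥ q` : the meeting multigraph `G(p,q)` is connected and acyclic.  The meeting
multigraph has exactly `n` edges (one per element of `{1,…,n}`), and a connected multigraph
is acyclic iff its number of edges is exactly one less than its number of vertices; so
`G(p,q)` is connected and acyclic iff it is connected (equivalently, the underlying simple
graph is connected) and `n + 1 = (#classes of p) + (#classes of q)`. -/
def Finpartition.Orthogonal {n : ℕ} (p q : PartitionN n) : Prop :=
  (meetingGraph p q).Connected ∧ n + 1 = p.parts.card + q.parts.card

/-- Orthogonality of two partition sets: `P ⊥ Q` iff `p ⊥ q` for all `p ∈ P`, `q ∈ Q`. -/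
def orthSet {n : ℕ} (P Q : Set (PartitionN n)) : Prop :=
  ∀ p ∈ P, ∀ q ∈ Q, p.Orthogonal q

/-- `P^⊥`, the maximal partition set orthogonal to `P`. -/
def orthCompl {n : ℕ} (P : Set (PartitionN n)) : Set (PartitionN n) :=
  {q | ∀ p ∈ P, p.Orthogonal q}

/-- The partition set of `⊗ⁿ` : the single partition of `{1,…,n}` into singleton classes. -/
def IsTensorSet {n : ℕ} (R : Set (PartitionN n)) : Prop :=
  R = {p : PartitionN n | ∀ c ∈ p.parts, c.card = 1}

/-- The partition set of `⅋ⁿ` : the single partition of `{1,…,n}` with one class. -/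
def IsParSet {n : ℕ} (R : Set (PartitionN n)) : Prop :=
  R = {p : PartitionN n | p.parts = {Finset.univ}}

open Finset

instance mgDec {n : ℕ} (p q : PartitionN n) : DecidableRel (meetingGraph p q).Adj := fun a b =>
  decidable_of_iff (a ≠ b ∧
    ((∃ (c : {c // c ∈ p.parts}) (d : {d // d ∈ q.parts}),
      ((c : Finset (Fin n)) ∩ (d : Finset (Fin n))).Nonempty ∧ a = Sum.inl c ∧ b = Sum.inr d) ∨
     (∃ (c : {c // c ∈ p.parts}) (d : {d // d ∈ q.parts}),
      ((c : Finset (Fin n)) ∩ (d : Finset (Fin n))).Nonempty ∧ b = Sum.inl c ∧ a = Sum.inr d)))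
    Iff.rfl

lemma walk_const {V : Type*} {G : SimpleGraph V} (f : V → Bool)
    (h : ∀ a b, G.Adj a b → f a = f b) {u v : V} (r : G.Reachable u v) : f u = f v := by
  obtain ⟨w⟩ := r
  induction w with
  | nil => rfl
  | cons ha _ ih => exact (h _ _ ha).trans ih

lemma mg_adj_cases {n : ℕ} {p q : PartitionN n}
    {a b : {c // c ∈ p.parts} ⊕ {d // d ∈ q.parts}} (hab : (meetingGraph p q).Adj a b) :
    (∃ (c : {c // c ∈ p.parts}) (d : {d // d ∈ q.parts}),
      ((c : Finset (Fin n)) ∩ (d : Finset (Fin n))).Nonempty ∧ a = Sum.inl c ∧ b = Sum.inr d) ∨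
    (∃ (c : {c // c ∈ p.parts}) (d : {d // d ∈ q.parts}),
      ((c : Finset (Fin n)) ∩ (d : Finset (Fin n))).Nonempty ∧ b = Sum.inl c ∧ a = Sum.inr d) := by
  rw [meetingGraph, SimpleGraph.fromRel_adj] at hab
  exact hab.2

/-- If no class of `q` meets both classes of a two-class partition `p`, the meeting graph
is disconnected. -/
lemma cross {p q : PartitionN 4} {A B : Finset (Fin 4)} (hp : p.parts = {A, B}) (hAB : A ≠ B)
    (hc : (meetingGraph p q).Connected) :
    ∃ d ∈ q.parts, (d ∩ A).Nonempty ∧ (d ∩ B).Nonempty := by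
  by_contra hno
  push_neg at hno
  set f : ({c // c ∈ p.parts} ⊕ {d // d ∈ q.parts}) → Bool := fun v =>
    match v with
    | Sum.inl c => decide ((c : Finset (Fin 4)) = A)
    | Sum.inr d => decide (((d : Finset (Fin 4)) ∩ A).Nonempty) with hf
  have key : ∀ (c : {c // c ∈ p.parts}) (d : {d // d ∈ q.parts}),
      ((c : Finset (Fin 4)) ∩ (d : Finset (Fin 4))).Nonempty →
      f (Sum.inl c) = f (Sum.inr d) := by
    rintro ⟨c, hcmem⟩ ⟨d, hdmem⟩ hcd
    rw [hp, mem_insert, mem_singleton] at hcmem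
    rcases hcmem with rfl | rfl
    · simp only [hf]
      rw [Finset.inter_comm] at hcd
      simp [hcd]
    · have h1 : ¬ (d ∩ A).Nonempty := fun hdA =>
        (by rwa [Finset.inter_comm] at hcd : (d ∩ _).Nonempty).ne_empty (hno d hdmem hdA)
      simp only [hf]
      simp [hAB.symm, h1]
  have hedge : ∀ a b, (meetingGraph p q).Adj a b → f a = f b := by
    intro a b hab
    rcases mg_adj_cases hab with ⟨c, d, hcd, rfl, rfl⟩ | ⟨c, d, hcd, rfl, rfl⟩
    · exact key c d hcd
    · exact (key c d hcd).symm
  have hA : A ∈ p.parts := by rw [hp]; exact mem_insert_self _ _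
  have hB : B ∈ p.parts := by rw [hp]; exact mem_insert_of_mem (mem_singleton_self _)
  have := walk_const f hedge (hc.preconnected (Sum.inl ⟨A, hA⟩) (Sum.inl ⟨B, hB⟩))
  have hBA : B = A := by simpa [hf] using this.symm
  exact hAB hBA.symm

/-- If some class `c` of `p` has the property that every class of `q` is either contained
in `c` or a singleton, and `p` has at least two classes, the meeting graph is disconnected. -/
lemma sep {p q : PartitionN 4} {c : Finset (Fin 4)} (hc : c ∈ p.parts)
    (h2 : 2 ≤ p.parts.card)
    (hparts : ∀ d ∈ q.parts, d ⊆ c ∨ d.card = 1)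
    (hconn : (meetingGraph p q).Connected) : False := by
  set f : ({c' // c' ∈ p.parts} ⊕ {d // d ∈ q.parts}) → Bool := fun v =>
    match v with
    | Sum.inl e => decide ((e : Finset (Fin 4)) = c)
    | Sum.inr d => decide (((d : Finset (Fin 4)) ∩ c).Nonempty) with hf
  have key : ∀ (e : {c' // c' ∈ p.parts}) (d : {d // d ∈ q.parts}),
      ((e : Finset (Fin 4)) ∩ (d : Finset (Fin 4))).Nonempty →
      f (Sum.inl e) = f (Sum.inr d) := by
    rintro ⟨e, hemem⟩ ⟨d, hdmem⟩ hed
    by_cases hec : e = c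
    · subst hec
      simp only [hf]
      rw [Finset.inter_comm] at hed
      simp [hed]
    · have hdisj : Disjoint e c := p.disjoint hemem hc hec
      have hdc : ¬ (d ∩ c).Nonempty := by
        rcases hparts d hdmem with hsub | h1
        · exfalso
          obtain ⟨x, hx⟩ := hed
          rw [mem_inter] at hx
          exact (Finset.disjoint_left.mp hdisj hx.1) (hsub hx.2)
        · obtain ⟨i, rfl⟩ := Finset.card_eq_one.mp h1
          obtain ⟨x, hx⟩ := hed
          rw [mem_inter, mem_singleton] at hx
          rintro ⟨y, hy⟩
          rw [mem_inter, mem_singleton] at hy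
          exact Finset.disjoint_left.mp hdisj (hx.2 ▸ hx.1) (hy.1 ▸ hy.2)
      simp only [hf]
      simp [hec, hdc]
  have hedge : ∀ a b, (meetingGraph p q).Adj a b → f a = f b := by
    intro a b hab
    rcases mg_adj_cases hab with ⟨e, d, hed, rfl, rfl⟩ | ⟨e, d, hed, rfl, rfl⟩
    · exact key e d hed
    · exact (key e d hed).symm
  obtain ⟨e, he, hecn⟩ : ∃ e ∈ p.parts, e ≠ c := by
    by_contra hall
    push_neg at hall
    have : p.parts ⊆ {c} := fun x hx => mem_singleton.mpr (hall x hx)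
    have := Finset.card_le_card this
    simp at this
    omega
  have heq : e = c := by
    simpa [hf] using (walk_const f hedge
      (hconn.preconnected (Sum.inl ⟨c, hc⟩) (Sum.inl ⟨e, he⟩))).symm
  exact hecn heq

lemma sum_cards (q : PartitionN 4) : ∑ i ∈ q.parts, i.card = 4 := by
  have := q.sum_card_parts
  simpa using this

lemma small_parts {q : PartitionN 4} (h3 : q.parts.card = 3) {d e : Finset (Fin 4)}
    (hd : d ∈ q.parts) (he : e ∈ q.parts) (hde : d ≠ e) (h2 : 2 ≤ d.card) : e.card = 1 := by
  have he1 : 1 ≤ e.card := Finset.card_pos.mpr (q.nonempty_of_mem_parts he)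
  by_contra hne
  have he2 : 2 ≤ e.card := by omega
  obtain ⟨x, hx, hxde⟩ : ∃ x ∈ q.parts, x ∉ ({d, e} : Finset (Finset (Fin 4))) := by
    by_contra hall
    push_neg at hall
    have hsub : q.parts ⊆ {d, e} := fun y hy => hall y hy
    have := Finset.card_le_card hsub
    have : ({d, e} : Finset (Finset (Fin 4))).card ≤ 2 := Finset.card_insert_le _ _ |>.trans (by simp)
    omega
  have hx1 : 1 ≤ x.card := Finset.card_pos.mpr (q.nonempty_of_mem_parts hx)
  have hdx : d ≠ x := fun h => hxde (h ▸ mem_insert_self _ _)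
  have hex : e ≠ x := fun h => hxde (h ▸ mem_insert_of_mem (mem_singleton_self _))
  have hsub : ({d, e, x} : Finset (Finset (Fin 4))) ⊆ q.parts := by
    intro y hy
    rcases mem_insert.mp hy with rfl | hy
    · exact hd
    rcases mem_insert.mp hy with rfl | hy
    · exact he
    · exact (mem_singleton.mp hy) ▸ hx
  have hsum : ∑ i ∈ ({d, e, x} : Finset (Finset (Fin 4))), i.card ≤ 4 := by
    exact le_trans (Finset.sum_le_sum_of_subset hsub) (le_of_eq (sum_cards q))
  rw [Finset.sum_insert (by simp [hde, hdx]), Finset.sum_insert (by simp [hex]),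
    Finset.sum_singleton] at hsum
  omega

lemma singleton_mem {q : PartitionN 4} (h3 : q.parts.card = 3) {d : Finset (Fin 4)}
    (hd : d ∈ q.parts) (h2 : 2 ≤ d.card) {u : Fin 4} (hu : u ∉ d) :
    ({u} : Finset (Fin 4)) ∈ q.parts := by
  obtain ⟨e, he, hue⟩ := q.exists_mem (mem_univ u)
  have hde : d ≠ e := fun h => hu (h ▸ hue)
  have h1 : e.card = 1 := small_parts h3 hd he hde h2
  obtain ⟨w, hw⟩ := Finset.card_eq_one.mp h1
  rw [hw, mem_singleton] at hue
  rwa [hw, ← hue] at he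

/-- Mirror image of `sep`, with the distinguished class in the second partition. -/
lemma sep' {p q : PartitionN 4} {c : Finset (Fin 4)} (hc : c ∈ q.parts)
    (h2 : 2 ≤ q.parts.card)
    (hparts : ∀ d ∈ p.parts, d ⊆ c ∨ d.card = 1)
    (hconn : (meetingGraph p q).Connected) : False := by
  set f : ({c' // c' ∈ p.parts} ⊕ {d // d ∈ q.parts}) → Bool := fun v =>
    match v with
    | Sum.inl d => decide (((d : Finset (Fin 4)) ∩ c).Nonempty)
    | Sum.inr e => decide ((e : Finset (Fin 4)) = c) with hf
  have key : ∀ (d : {c' // c' ∈ p.parts}) (e : {d // d ∈ q.parts}),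
      ((d : Finset (Fin 4)) ∩ (e : Finset (Fin 4))).Nonempty →
      f (Sum.inl d) = f (Sum.inr e) := by
    rintro ⟨d, hdmem⟩ ⟨e, hemem⟩ hde
    by_cases hec : e = c
    · subst hec
      simp only [hf]
      simp [hde]
    · have hdisj : Disjoint e c := q.disjoint hemem hc hec
      have hdc : ¬ (d ∩ c).Nonempty := by
        rcases hparts d hdmem with hsub | h1
        · exfalso
          obtain ⟨x, hx⟩ := hde
          rw [mem_inter] at hx
          exact Finset.disjoint_left.mp hdisj hx.2 (hsub hx.1)
        · obtain ⟨i, rfl⟩ := Finset.card_eq_one.mp h1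
          obtain ⟨x, hx⟩ := hde
          rw [mem_inter, mem_singleton] at hx
          rintro ⟨y, hy⟩
          rw [mem_inter, mem_singleton] at hy
          exact Finset.disjoint_left.mp hdisj (hx.1 ▸ hx.2) (hy.1 ▸ hy.2)
      simp only [hf]
      simp [hec, hdc]
  have hedge : ∀ a b, (meetingGraph p q).Adj a b → f a = f b := by
    intro a b hab
    rcases mg_adj_cases hab with ⟨d, e, hde, rfl, rfl⟩ | ⟨d, e, hde, rfl, rfl⟩
    · exact key d e hde
    · exact (key d e hde).symm
  obtain ⟨e, he, hecn⟩ : ∃ e ∈ q.parts, e ≠ c := by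
    by_contra hall
    push_neg at hall
    have : q.parts ⊆ {c} := fun x hx => mem_singleton.mpr (hall x hx)
    have := Finset.card_le_card this
    simp at this
    omega
  have heq : e = c := by
    simpa [hf] using (walk_const f hedge
      (hconn.preconnected (Sum.inr ⟨c, hc⟩) (Sum.inr ⟨e, he⟩))).symm
  exact hecn heq

def P1 : PartitionN 4 where
  parts := {({0,1} : Finset (Fin 4)), {2,3}}
  supIndep := by decide
  sup_parts := by decide
  bot_notMem := by decide
def P2 : PartitionN 4 where
  parts := {({0,2} : Finset (Fin 4)), {1,3}}
  supIndep := by decide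
  sup_parts := by decide
  bot_notMem := by decide
def Q1 : PartitionN 4 where
  parts := {({0,3} : Finset (Fin 4)), {1}, {2}}
  supIndep := by decide
  sup_parts := by decide
  bot_notMem := by decide
def Q2 : PartitionN 4 where
  parts := {({1,2} : Finset (Fin 4)), {0}, {3}}
  supIndep := by decide
  sup_parts := by decide
  bot_notMem := by decide

lemma card_ge_two : ∀ d : Finset (Fin 4),
    (d ∩ {0,1}).Nonempty → (d ∩ {2,3}).Nonempty → 2 ≤ d.card := by decide

lemma card_ge_two' : ∀ d : Finset (Fin 4),
    (d ∩ {0,2}).Nonempty → (d ∩ {1,3}).Nonempty → 2 ≤ d.card := by decide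

lemma doubleton_cases : ∀ d : Finset (Fin 4), d.card = 2 ∧
    (d ∩ {0,1}).Nonempty ∧ (d ∩ {2,3}).Nonempty ∧
    (d ∩ {0,2}).Nonempty ∧ (d ∩ {1,3}).Nonempty →
    d = {0,3} ∨ d = {1,2} := by decide

lemma two_parts_cases : ∀ A B : Finset (Fin 4), (A ∪ B = Finset.univ ∧
    ¬((0:Fin 4) ∈ A ∧ (3:Fin 4) ∈ A) ∧ ¬((0:Fin 4) ∈ B ∧ (3:Fin 4) ∈ B) ∧
    ¬((1:Fin 4) ∈ A ∧ (2:Fin 4) ∈ A) ∧ ¬((1:Fin 4) ∈ B ∧ (2:Fin 4) ∈ B)) →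
    (({A, B} : Finset (Finset (Fin 4))) = {{0,1},{2,3}} ∨
     ({A, B} : Finset (Finset (Fin 4))) = {{0,2},{1,3}}) := by decide

set_option maxHeartbeats 1000000 in
lemma orth_P1Q1 : (meetingGraph P1 Q1).Connected := by
  rw [SimpleGraph.connected_iff]
  exact ⟨by decide, ⟨Sum.inl ⟨{0,1}, by decide⟩⟩⟩
set_option maxHeartbeats 1000000 in
lemma orth_P1Q2 : (meetingGraph P1 Q2).Connected := by
  rw [SimpleGraph.connected_iff]
  exact ⟨by decide, ⟨Sum.inl ⟨{0,1}, by decide⟩⟩⟩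
set_option maxHeartbeats 1000000 in
lemma orth_P2Q1 : (meetingGraph P2 Q1).Connected := by
  rw [SimpleGraph.connected_iff]
  exact ⟨by decide, ⟨Sum.inl ⟨{0,2}, by decide⟩⟩⟩
set_option maxHeartbeats 1000000 in
lemma orth_P2Q2 : (meetingGraph P2 Q2).Connected := by
  rw [SimpleGraph.connected_iff]
  exact ⟨by decide, ⟨Sum.inl ⟨{0,2}, by decide⟩⟩⟩

set_option maxHeartbeats 1000000 in
lemma orth_Q1P1 : (meetingGraph Q1 P1).Connected := by
  rw [SimpleGraph.connected_iff]
  exact ⟨by decide, ⟨Sum.inr ⟨{0,1}, by decide⟩⟩⟩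
set_option maxHeartbeats 1000000 in
lemma orth_Q1P2 : (meetingGraph Q1 P2).Connected := by
  rw [SimpleGraph.connected_iff]
  exact ⟨by decide, ⟨Sum.inr ⟨{0,2}, by decide⟩⟩⟩
set_option maxHeartbeats 1000000 in
lemma orth_Q2P1 : (meetingGraph Q2 P1).Connected := by
  rw [SimpleGraph.connected_iff]
  exact ⟨by decide, ⟨Sum.inr ⟨{0,1}, by decide⟩⟩⟩
set_option maxHeartbeats 1000000 in
lemma orth_Q2P2 : (meetingGraph Q2 P2).Connected := by
  rw [SimpleGraph.connected_iff]
  exact ⟨by decide, ⟨Sum.inr ⟨{0,2}, by decide⟩⟩⟩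

lemma orth_iff {n : ℕ} {p q : PartitionN n} : p.Orthogonal q ↔
    ((meetingGraph p q).Connected ∧ n + 1 = p.parts.card + q.parts.card) := Iff.rfl


/-- **The Danos–Regnier 4-ary non-decomposable connective is a dual pair.**
Let `P = {{(1,2),(3,4)}, {(1,3),(2,4)}}` and `Q = {{(1,4),(2),(3)}, {(2,3),(1),(4)}}`
(written with `0`-based indices).  Then `P ⊥ Q`, `P^⊥ = Q` and `Q^⊥ = P`, so `(P, Q)`
forms a pair of 4-ary generalized connectives `(C, C*)`. -/
theorem danos_regnier_four_ary_dual_pair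
    (p₁ p₂ q₁ q₂ : PartitionN 4)
    (hp₁ : p₁.parts = {({0, 1} : Finset (Fin 4)), {2, 3}})
    (hp₂ : p₂.parts = {({0, 2} : Finset (Fin 4)), {1, 3}})
    (hq₁ : q₁.parts = {({0, 3} : Finset (Fin 4)), {1}, {2}})
    (hq₂ : q₂.parts = {({1, 2} : Finset (Fin 4)), {0}, {3}}) :
    orthSet {p₁, p₂} {q₁, q₂} ∧
    orthCompl {p₁, p₂} = {q₁, q₂} ∧
    orthCompl {q₁, q₂} = {p₁, p₂} := by
  have e1 : p₁ = P1 := Finpartition.ext hp₁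
  have e2 : p₂ = P2 := Finpartition.ext hp₂
  have e3 : q₁ = Q1 := Finpartition.ext hq₁
  have e4 : q₂ = Q2 := Finpartition.ext hq₂
  subst e1 e2 e3 e4
  have o11 : P1.Orthogonal Q1 := orth_iff.mpr ⟨orth_P1Q1, by decide⟩
  have o12 : P1.Orthogonal Q2 := orth_iff.mpr ⟨orth_P1Q2, by decide⟩
  have o21 : P2.Orthogonal Q1 := orth_iff.mpr ⟨orth_P2Q1, by decide⟩
  have o22 : P2.Orthogonal Q2 := orth_iff.mpr ⟨orth_P2Q2, by decide⟩
  have o11' : Q1.Orthogonal P1 := orth_iff.mpr ⟨orth_Q1P1, by decide⟩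
  have o12' : Q1.Orthogonal P2 := orth_iff.mpr ⟨orth_Q1P2, by decide⟩
  have o21' : Q2.Orthogonal P1 := orth_iff.mpr ⟨orth_Q2P1, by decide⟩
  have o22' : Q2.Orthogonal P2 := orth_iff.mpr ⟨orth_Q2P2, by decide⟩
  refine ⟨?_, ?_, ?_⟩
  · intro p hp q hq
    simp only [Set.mem_insert_iff, Set.mem_singleton_iff] at hp hq
    rcases hp with rfl | rfl <;> rcases hq with rfl | rfl <;>
      first | exact o11 | exact o12 | exact o21 | exact o22
  · ext q
    simp only [orthCompl, Set.mem_setOf_eq, Set.mem_insert_iff, Set.mem_singleton_iff]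
    constructor
    · intro h
      have h1 := h P1 (Or.inl rfl)
      have h2 := h P2 (Or.inr rfl)
      obtain ⟨hc1, hn1⟩ := orth_iff.mp h1
      obtain ⟨hc2, hn2⟩ := orth_iff.mp h2
      have hP1c : P1.parts.card = 2 := by decide
      have hq3 : q.parts.card = 3 := by rw [hP1c] at hn1; omega
      obtain ⟨d, hd, hd01, hd23⟩ := cross (p := P1) (q := q) rfl (by decide) hc1
      obtain ⟨d', hd', hd02, hd13⟩ := cross (p := P2) (q := q) rfl (by decide) hc2
      have h2d : 2 ≤ d.card := card_ge_two d hd01 hd23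
      have h2d' : 2 ≤ d'.card := card_ge_two' d' hd02 hd13
      have hdd : d = d' := by
        by_contra hne
        have := small_parts hq3 hd hd' hne h2d
        omega
      rw [← hdd] at hd02 hd13
      obtain ⟨A, B, C, hab, hac, hbc, hparts3⟩ := Finset.card_eq_three.mp hq3
      have hAm : A ∈ q.parts := by rw [hparts3]; exact mem_insert_self _ _
      have hBm : B ∈ q.parts := by
        rw [hparts3]; exact mem_insert_of_mem (mem_insert_self _ _)
      have hCm : C ∈ q.parts := by
        rw [hparts3]; exact mem_insert_of_mem (mem_insert_of_mem (mem_singleton_self _))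
      have hsum : A.card + B.card + C.card = 4 := by
        have hs := sum_cards q
        rw [hparts3, Finset.sum_insert (by simp [hab, hac]),
          Finset.sum_insert (by simp [hbc]), Finset.sum_singleton] at hs
        omega
      have hdmem : d ∈ ({A, B, C} : Finset (Finset (Fin 4))) := hparts3 ▸ hd
      have hcard2 : d.card = 2 := by
        rcases mem_insert.mp hdmem with rfl | hdm
        · have hB1 : B.card = 1 := small_parts hq3 hd hBm hab h2d
          have hC1 : C.card = 1 := small_parts hq3 hd hCm hac h2d
          omega
        · rcases mem_insert.mp hdm with rfl | hdm'
          · have hA1 : A.card = 1 := small_parts hq3 hd hAm (Ne.symm hab) h2d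
            have hC1 : C.card = 1 := small_parts hq3 hd hCm hbc h2d
            omega
          · obtain rfl := mem_singleton.mp hdm'
            have hA1 : A.card = 1 := small_parts hq3 hd hAm (Ne.symm hac) h2d
            have hB1 : B.card = 1 := small_parts hq3 hd hBm (Ne.symm hbc) h2d
            omega
      rcases doubleton_cases d ⟨hcard2, hd01, hd23, hd02, hd13⟩ with rfl | rfl
      · left
        have hs1 : ({1} : Finset (Fin 4)) ∈ q.parts := singleton_mem hq3 hd h2d (by decide)
        have hs2 : ({2} : Finset (Fin 4)) ∈ q.parts := singleton_mem hq3 hd h2d (by decide)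
        have hsub : ({({0,3} : Finset (Fin 4)), {1}, {2}} : Finset (Finset (Fin 4))) ⊆ q.parts := by
          intro x hx
          simp only [mem_insert, mem_singleton] at hx
          rcases hx with rfl | rfl | rfl
          exacts [hd, hs1, hs2]
        have heq : ({({0,3} : Finset (Fin 4)), {1}, {2}} : Finset (Finset (Fin 4))) = q.parts :=
          Finset.eq_of_subset_of_card_le hsub (by rw [hq3]; decide)
        exact Finpartition.ext heq.symm
      · right
        have hs1 : ({0} : Finset (Fin 4)) ∈ q.parts := singleton_mem hq3 hd h2d (by decide)
        have hs2 : ({3} : Finset (Fin 4)) ∈ q.parts := singleton_mem hq3 hd h2d (by decide)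
        have hsub : ({({1,2} : Finset (Fin 4)), {0}, {3}} : Finset (Finset (Fin 4))) ⊆ q.parts := by
          intro x hx
          simp only [mem_insert, mem_singleton] at hx
          rcases hx with rfl | rfl | rfl
          exacts [hd, hs1, hs2]
        have heq : ({({1,2} : Finset (Fin 4)), {0}, {3}} : Finset (Finset (Fin 4))) = q.parts :=
          Finset.eq_of_subset_of_card_le hsub (by rw [hq3]; decide)
        exact Finpartition.ext heq.symm
    · rintro (rfl | rfl) p hp <;>
        rcases hp with rfl | rfl
      exacts [o11, o21, o12, o22]
  · ext p
    simp only [orthCompl, Set.mem_setOf_eq, Set.mem_insert_iff, Set.mem_singleton_iff]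
    constructor
    · intro h
      have h1 := h Q1 (Or.inl rfl)
      have h2 := h Q2 (Or.inr rfl)
      obtain ⟨hc1, hn1⟩ := orth_iff.mp h1
      obtain ⟨hc2, hn2⟩ := orth_iff.mp h2
      have hQ1c : Q1.parts.card = 3 := by decide
      have hp2 : p.parts.card = 2 := by rw [hQ1c] at hn1; omega
      have hn03 : ∀ c ∈ p.parts, ¬((0:Fin 4) ∈ c ∧ (3:Fin 4) ∈ c) := by
        rintro c hc ⟨h0, h3⟩
        refine sep' (p := Q1) (q := p) hc (by omega) ?_ hc1
        intro d hd
        have hdq : d = {0,3} ∨ d = {1} ∨ d = {2} := by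
          have hd' : d ∈ ({({0,3} : Finset (Fin 4)), {1}, {2}} : Finset (Finset (Fin 4))) := hd
          simpa [mem_insert, mem_singleton] using hd'
        rcases hdq with rfl | rfl | rfl
        · left
          simp [insert_subset_iff, singleton_subset_iff, h0, h3]
        · right; rfl
        · right; rfl
      have hn12 : ∀ c ∈ p.parts, ¬((1:Fin 4) ∈ c ∧ (2:Fin 4) ∈ c) := by
        rintro c hc ⟨h1m, h2m⟩
        refine sep' (p := Q2) (q := p) hc (by omega) ?_ hc2
        intro d hd
        have hdq : d = {1,2} ∨ d = {0} ∨ d = {3} := by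
          have hd' : d ∈ ({({1,2} : Finset (Fin 4)), {0}, {3}} : Finset (Finset (Fin 4))) := hd
          simpa [mem_insert, mem_singleton] using hd'
        rcases hdq with rfl | rfl | rfl
        · left
          simp [insert_subset_iff, singleton_subset_iff, h1m, h2m]
        · right; rfl
        · right; rfl
      obtain ⟨A, B, hAB, hpAB⟩ := Finset.card_eq_two.mp hp2
      have hAm : A ∈ p.parts := by rw [hpAB]; exact mem_insert_self _ _
      have hBm : B ∈ p.parts := by rw [hpAB]; exact mem_insert_of_mem (mem_singleton_self _)
      have hcover : A ∪ B = Finset.univ := by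
        have hs := p.sup_parts
        rw [hpAB] at hs
        simpa using hs
      rcases two_parts_cases A B
          ⟨hcover, hn03 A hAm, hn03 B hBm, hn12 A hAm, hn12 B hBm⟩ with h | h
      · left
        exact Finpartition.ext (by rw [hpAB]; exact h)
      · right
        exact Finpartition.ext (by rw [hpAB]; exact h)
    · rintro (rfl | rfl) q' hq' <;>
        rcases hq' with rfl | rfl
      exacts [o11', o21', o12', o22']
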